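/- arXiv:1707.01116 — 5 statements merged into one kernel-verified Lean document; each statement's English description precedes it below -/
import Mathlib

section
/- Let θ>0, γ>0, β>1 and let n be a natural number with 2n ≤ β. Then for every x>0 the function B̃_n(x) = x^{β+1} e^{γ/x} (dⁿ/dxⁿ)(x^{2n−β−1} e^{−γ/x}) satisfies the eigenfunction identity (θ/(β−1)) x² B̃_n''(x) − θ(x − γ/(β−1)) B̃_n'(x) = −λ_n B̃_n(x), where λ_n = θ n(β−n)/(β−1). -/
open Set Filter
open scoped ContDiff

lemma rg_hasDerivAt_exp_div (c : ℝ) {x : ℝ} (hx : x ≠ 0) :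
    HasDerivAt (fun y : ℝ => Real.exp (c / y)) (Real.exp (c / x) * (-c / x ^ 2)) x := by
  have h : HasDerivAt (fun y : ℝ => c / y) (-c / x ^ 2) x := by
    have h2 := (hasDerivAt_inv hx).const_mul c
    simp only [div_eq_mul_inv]
    refine h2.congr_deriv ?_
    ring
  exact h.exp

lemma rg_g_contDiffOn (a γ : ℝ) :
    ContDiffOn ℝ ∞ (fun y : ℝ => y ^ a * Real.exp (-γ / y)) (Set.Ioi 0) := by
  intro x hx
  apply ContDiffAt.contDiffWithinAt
  have h1 : ContDiffAt ℝ ∞ (fun y : ℝ => y ^ a) x :=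
    Real.contDiffAt_rpow_const_of_ne (ne_of_gt hx)
  have h2 : ContDiffAt ℝ ∞ (fun y : ℝ => Real.exp (-γ / y)) x := by
    have h3 : ContDiffAt ℝ ∞ (fun y : ℝ => -γ / y) x :=
      contDiffAt_const.div contDiffAt_id (ne_of_gt hx)
    exact (Real.contDiff_exp.contDiffAt).comp x h3
  exact h1.mul h2

lemma rg_H_contDiffOn (a γ : ℝ) (k : ℕ) :
    ContDiffOn ℝ ∞ (iteratedDeriv k (fun y : ℝ => y ^ a * Real.exp (-γ / y))) (Set.Ioi 0) := by
  induction k with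
  | zero => simpa [iteratedDeriv_zero] using rg_g_contDiffOn a γ
  | succ k ih =>
      rw [iteratedDeriv_succ]
      exact ((contDiffOn_infty_iff_deriv_of_isOpen isOpen_Ioi).1 ih).2

lemma rg_H_hasDerivAt (a γ : ℝ) (k : ℕ) {x : ℝ} (hx : 0 < x) :
    HasDerivAt (iteratedDeriv k (fun y : ℝ => y ^ a * Real.exp (-γ / y)))
      (iteratedDeriv (k + 1) (fun y : ℝ => y ^ a * Real.exp (-γ / y)) x) x := by
  have hd : DifferentiableAt ℝ (iteratedDeriv k (fun y : ℝ => y ^ a * Real.exp (-γ / y))) x :=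
    ((contDiffOn_infty_iff_deriv_of_isOpen isOpen_Ioi).1 (rg_H_contDiffOn a γ k)).1.differentiableAt
      (isOpen_Ioi.mem_nhds hx)
  rw [iteratedDeriv_succ]
  exact hd.hasDerivAt

lemma rg_base (a γ : ℝ) {x : ℝ} (hx : 0 < x) :
    x ^ 2 * iteratedDeriv 1 (fun y : ℝ => y ^ a * Real.exp (-γ / y)) x
      = (a * x + γ) * iteratedDeriv 0 (fun y : ℝ => y ^ a * Real.exp (-γ / y)) x := by
  have hr : HasDerivAt (fun y : ℝ => y ^ a) (a * x ^ (a - 1)) x :=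
    Real.hasDerivAt_rpow_const (Or.inl hx.ne')
  have hexp := rg_hasDerivAt_exp_div (-γ) hx.ne'
  have hg := hr.mul hexp
  have h1 : iteratedDeriv 1 (fun y : ℝ => y ^ a * Real.exp (-γ / y)) x
      = a * x ^ (a - 1) * Real.exp (-γ / x) + x ^ a * (Real.exp (-γ / x) * (- -γ / x ^ 2)) := by
    rw [iteratedDeriv_one]
    exact hg.deriv
  rw [h1, iteratedDeriv_zero]
  have e1 : x ^ (a - 1) = x ^ a / x := by
    rw [Real.rpow_sub hx, Real.rpow_one]
  rw [e1]
  field_simp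

lemma rg_ode (a γ : ℝ) (k : ℕ) : ∀ x : ℝ, 0 < x →
    x ^ 2 * iteratedDeriv (k + 2) (fun y : ℝ => y ^ a * Real.exp (-γ / y)) x
      + (2 * ((k : ℝ) + 1)) * x * iteratedDeriv (k + 1) (fun y : ℝ => y ^ a * Real.exp (-γ / y)) x
      + (((k : ℝ) + 1) * k) * iteratedDeriv k (fun y : ℝ => y ^ a * Real.exp (-γ / y)) x
    = (a * x + γ) * iteratedDeriv (k + 1) (fun y : ℝ => y ^ a * Real.exp (-γ / y)) x
      + (((k : ℝ) + 1) * a) * iteratedDeriv k (fun y : ℝ => y ^ a * Real.exp (-γ / y)) x := by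
  set g : ℝ → ℝ := fun y : ℝ => y ^ a * Real.exp (-γ / y) with hgdef
  induction k with
  | zero =>
      intro x hx
      have hF : HasDerivAt (fun y : ℝ => y ^ 2 * iteratedDeriv 1 g y)
          ((2 : ℕ) * x ^ 1 * iteratedDeriv 1 g x + x ^ 2 * iteratedDeriv 2 g x) x :=
        (hasDerivAt_pow 2 x).mul (rg_H_hasDerivAt a γ 1 hx)
      have hG : HasDerivAt (fun y : ℝ => (a * y + γ) * iteratedDeriv 0 g y)
          ((a * 1) * iteratedDeriv 0 g x + (a * x + γ) * iteratedDeriv 1 g x) x :=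
        (((hasDerivAt_id x).const_mul a).add_const γ).mul (rg_H_hasDerivAt a γ 0 hx)
      have heq : (fun y : ℝ => y ^ 2 * iteratedDeriv 1 g y)
          =ᶠ[nhds x] (fun y : ℝ => (a * y + γ) * iteratedDeriv 0 g y) :=
        eventuallyEq_of_mem (isOpen_Ioi.mem_nhds hx) (fun y hy => rg_base a γ hy)
      have hkey := hF.unique (hG.congr_of_eventuallyEq heq)
      push_cast at hkey ⊢
      linear_combination hkey
  | succ k ih =>
      intro x hx
      have hF : HasDerivAt (fun y : ℝ => y ^ 2 * iteratedDeriv (k + 2) g y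
            + (2 * ((k : ℝ) + 1)) * y * iteratedDeriv (k + 1) g y
            + (((k : ℝ) + 1) * k) * iteratedDeriv k g y)
          ((2 : ℕ) * x ^ 1 * iteratedDeriv (k + 2) g x + x ^ 2 * iteratedDeriv (k + 3) g x
            + ((2 * ((k : ℝ) + 1)) * 1 * iteratedDeriv (k + 1) g x
              + (2 * ((k : ℝ) + 1)) * x * iteratedDeriv (k + 2) g x)
            + (((k : ℝ) + 1) * k) * iteratedDeriv (k + 1) g x) x := by
        exact (((hasDerivAt_pow 2 x).mul (rg_H_hasDerivAt a γ (k + 2) hx)).add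
          ((((hasDerivAt_id x).const_mul (2 * ((k : ℝ) + 1))).mul
            (rg_H_hasDerivAt a γ (k + 1) hx)))).add
          ((rg_H_hasDerivAt a γ k hx).const_mul (((k : ℝ) + 1) * k))
      have hG : HasDerivAt (fun y : ℝ => (a * y + γ) * iteratedDeriv (k + 1) g y
            + (((k : ℝ) + 1) * a) * iteratedDeriv k g y)
          ((a * 1) * iteratedDeriv (k + 1) g x + (a * x + γ) * iteratedDeriv (k + 2) g x
            + (((k : ℝ) + 1) * a) * iteratedDeriv (k + 1) g x) x :=
        ((((hasDerivAt_id x).const_mul a).add_const γ).mul (rg_H_hasDerivAt a γ (k + 1) hx)).add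
          ((rg_H_hasDerivAt a γ k hx).const_mul (((k : ℝ) + 1) * a))
      have heq : (fun y : ℝ => y ^ 2 * iteratedDeriv (k + 2) g y
            + (2 * ((k : ℝ) + 1)) * y * iteratedDeriv (k + 1) g y
            + (((k : ℝ) + 1) * k) * iteratedDeriv k g y)
          =ᶠ[nhds x] (fun y : ℝ => (a * y + γ) * iteratedDeriv (k + 1) g y
            + (((k : ℝ) + 1) * a) * iteratedDeriv k g y) :=
        eventuallyEq_of_mem (isOpen_Ioi.mem_nhds hx) (fun y hy => ih y hy)
      have hkey := hF.unique (hG.congr_of_eventuallyEq heq)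
      push_cast at hkey ⊢
      have h23 : k + 1 + 2 = k + 3 := by ring
      rw [h23]
      linear_combination hkey

/-- The Bessel function `B̃_n` given by the Rodrigues formula is an
eigenfunction of the generator of the reciprocal gamma diffusion with eigenvalue
`λ_n = θ n (β - n) / (β - 1)`. -/
theorem rg_bessel_eigenfunction (θ γ β : ℝ) (n : ℕ)
    (hθ : 0 < θ) (hγ : 0 < γ) (hβ : 1 < β) (hn : (2 * n : ℝ) ≤ β)
    (B : ℝ → ℝ)
    (hB : B = fun x : ℝ => x ^ (β + 1) * Real.exp (γ / x) *
      iteratedDeriv n (fun y : ℝ => y ^ (2 * (n : ℝ) - β - 1) * Real.exp (-γ / y)) x) :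
    ∀ x : ℝ, 0 < x →
      (θ / (β - 1)) * x ^ 2 * deriv (deriv B) x - θ * (x - γ / (β - 1)) * deriv B x
        = -(θ * n * (β - n) / (β - 1)) * B x := by
  subst hB
  intro x hx
  set a : ℝ := 2 * (n : ℝ) - β - 1 with ha
  set g : ℝ → ℝ := fun y : ℝ => y ^ a * Real.exp (-γ / y) with hgdef
  have hb1 : β - 1 ≠ 0 := (sub_pos.2 hβ).ne'
  -- power conversion helpers
  have e1 : ∀ z : ℝ, 0 < z → z ^ (β + 1 - 1) = z ^ (β - 2) * z ^ 2 := by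
    intro z hz
    rw [show β + 1 - 1 = β - 2 + 2 by ring, Real.rpow_add hz,
      show (2 : ℝ) = ((2 : ℕ) : ℝ) by norm_num, Real.rpow_natCast]
  have e2 : ∀ z : ℝ, 0 < z → z ^ (β + 1) = z ^ (β - 2) * z ^ 3 := by
    intro z hz
    rw [show β + 1 = β - 2 + 3 by ring, Real.rpow_add hz,
      show (3 : ℝ) = ((3 : ℕ) : ℝ) by norm_num, Real.rpow_natCast]
  -- first derivative of B on Ioi 0
  have hDB : ∀ y ∈ Set.Ioi (0 : ℝ), deriv (fun x : ℝ => x ^ (β + 1) * Real.exp (γ / x) *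
        iteratedDeriv n g x) y
      = Real.exp (γ / y) * y ^ (β - 2) *
          (((β + 1) * y ^ 2 - γ * y) * iteratedDeriv n g y
            + y ^ 2 * y * iteratedDeriv (n + 1) g y) := by
    intro y hy
    have hy0 : (0 : ℝ) < y := hy
    have hr : HasDerivAt (fun z : ℝ => z ^ (β + 1)) ((β + 1) * y ^ (β + 1 - 1)) y :=
      Real.hasDerivAt_rpow_const (Or.inl hy0.ne')
    have hE := rg_hasDerivAt_exp_div γ hy0.ne'
    have hBy := (hr.mul hE).mul (rg_H_hasDerivAt a γ n hy0)
    rw [show deriv (fun x : ℝ => x ^ (β + 1) * Real.exp (γ / x) * iteratedDeriv n g x) y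
        = deriv (((fun z : ℝ => z ^ (β + 1)) * fun y : ℝ => Real.exp (γ / y)) *
          iteratedDeriv n fun y : ℝ => y ^ a * Real.exp (-γ / y)) y from rfl, hBy.deriv]
    simp only [Pi.mul_apply]
    rw [← hgdef, e1 y hy0, e2 y hy0]
    field_simp
    ring
  -- second derivative of B at x
  have hD2 : deriv (deriv (fun x : ℝ => x ^ (β + 1) * Real.exp (γ / x) *
        iteratedDeriv n g x)) x
      = (Real.exp (γ / x) * (-γ / x ^ 2) * x ^ (β - 2)
          + Real.exp (γ / x) * ((β - 2) * x ^ (β - 2 - 1))) *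
          (((β + 1) * x ^ 2 - γ * x) * iteratedDeriv n g x
            + x ^ 2 * x * iteratedDeriv (n + 1) g x)
        + Real.exp (γ / x) * x ^ (β - 2) *
          ((((β + 1) * ((2 : ℕ) * x ^ 1) - γ * 1) * iteratedDeriv n g x
              + ((β + 1) * x ^ 2 - γ * x) * iteratedDeriv (n + 1) g x)
            + (((2 : ℕ) * x ^ 1 * x + x ^ 2 * 1) * iteratedDeriv (n + 1) g x
              + x ^ 2 * x * iteratedDeriv (n + 2) g x)) := by
    have heq : deriv (fun x : ℝ => x ^ (β + 1) * Real.exp (γ / x) * iteratedDeriv n g x)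
        =ᶠ[nhds x] (fun y : ℝ => Real.exp (γ / y) * y ^ (β - 2) *
          (((β + 1) * y ^ 2 - γ * y) * iteratedDeriv n g y
            + y ^ 2 * y * iteratedDeriv (n + 1) g y)) :=
      eventuallyEq_of_mem (isOpen_Ioi.mem_nhds hx) hDB
    rw [heq.deriv_eq]
    have hE := rg_hasDerivAt_exp_div γ hx.ne'
    have hu : HasDerivAt (fun z : ℝ => z ^ (β - 2)) ((β - 2) * x ^ (β - 2 - 1)) x :=
      Real.hasDerivAt_rpow_const (Or.inl hx.ne')
    have hq1 : HasDerivAt (fun z : ℝ => (β + 1) * z ^ 2 - γ * z)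
        ((β + 1) * ((2 : ℕ) * x ^ 1) - γ * 1) x :=
      ((hasDerivAt_pow 2 x).const_mul (β + 1)).sub ((hasDerivAt_id x).const_mul γ)
    have hq3 : HasDerivAt (fun z : ℝ => z ^ 2 * z) ((2 : ℕ) * x ^ 1 * x + x ^ 2 * 1) x :=
      (hasDerivAt_pow 2 x).mul (hasDerivAt_id x)
    have hQ := (hq1.mul (rg_H_hasDerivAt a γ n hx)).add
      (hq3.mul (rg_H_hasDerivAt a γ (n + 1) hx))
    exact ((hE.mul hu).mul hQ).deriv
  -- the ODE for h = g^(n)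
  have hh2 : iteratedDeriv (n + 2) g x
      = ((a * x + γ) * iteratedDeriv (n + 1) g x
          + (((n : ℝ) + 1) * a - ((n : ℝ) + 1) * n) * iteratedDeriv n g x
          - (2 * ((n : ℝ) + 1)) * x * iteratedDeriv (n + 1) g x) / x ^ 2 := by
    have hode := rg_ode a γ n x hx
    field_simp
    linear_combination hode
  rw [hD2, hDB x hx, hh2]
  have hbm : x ^ (β - 2 - 1) = x ^ (β - 2) / x := by
    rw [Real.rpow_sub hx, Real.rpow_one]
  rw [hbm]
  have hBx : (fun x : ℝ => x ^ (β + 1) * Real.exp (γ / x) * iteratedDeriv n g x) x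
      = x ^ (β - 2) * x ^ 3 * Real.exp (γ / x) * iteratedDeriv n g x := by
    simp only []
    rw [e2 x hx]
  rw [hBx, ha]
  field_simp
  ring
end

section
/- Let γ>0, β>1 and let n be a natural number with 2n ≤ β. Then the function B̃_n(x) = x^{β+1} e^{γ/x} (dⁿ/dxⁿ)(x^{2n−β−1} e^{−γ/x}) coincides on (0,∞) with a polynomial of degree exactly n. -/
open Polynomial Finset

noncomputable def bP (a γ : ℝ) : ℕ → ℝ[X]
  | 0 => 1
  | (k+1) => (C (a - 2 * (k : ℝ)) * X + C γ) * bP a γ k + X ^ 2 * (bP a γ k).derivative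

lemma bP_succ (a γ : ℝ) (k : ℕ) :
    bP a γ (k + 1) = (C (a - 2 * (k : ℝ)) * X + C γ) * bP a γ k + X ^ 2 * (bP a γ k).derivative := rfl

lemma bP_natDegree_le (a γ : ℝ) : ∀ k, (bP a γ k).natDegree ≤ k := by
  intro k
  induction k with
  | zero => simp [bP]
  | succ k ih =>
    rw [bP_succ]
    refine (natDegree_add_le _ _).trans (max_le ?_ ?_)
    · refine natDegree_mul_le.trans ?_
      have h1 : (C (a - 2 * (k : ℝ)) * X + C γ).natDegree ≤ 1 := by compute_degree
      omega
    · rcases eq_or_ne (bP a γ k).derivative 0 with h | h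
      · simp [h]
      · refine natDegree_mul_le.trans ?_
        have hne : (bP a γ k).natDegree ≠ 0 := by
          intro h0
          exact h (by rw [eq_C_of_natDegree_eq_zero h0]; simp)
        have h2 := natDegree_derivative_lt hne
        have h3 : ((X : ℝ[X]) ^ 2).natDegree = 2 := natDegree_X_pow 2
        omega

lemma bP_coeff (a γ : ℝ) : ∀ k, (bP a γ k).coeff k = ∏ j ∈ Finset.range k, (a - j) := by
  intro k
  induction k with
  | zero => simp [bP]
  | succ k ih =>
    rw [bP_succ, coeff_add]
    have hA : ((C (a - 2 * (k : ℝ)) * X + C γ) * bP a γ k).coeff (k + 1)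
        = (a - 2 * k) * (bP a γ k).coeff k := by
      rw [add_mul, coeff_add, mul_assoc, coeff_C_mul, coeff_X_mul, coeff_C_mul,
        coeff_eq_zero_of_natDegree_lt (lt_of_le_of_lt (bP_natDegree_le a γ k) (Nat.lt_succ_self k))]
      ring
    have hBc : ((X : ℝ[X]) ^ 2 * (bP a γ k).derivative).coeff (k + 1)
        = (k : ℝ) * (bP a γ k).coeff k := by
      rw [mul_comm, coeff_mul_X_pow']
      cases k with
      | zero => simp
      | succ m =>
        rw [if_pos (by omega : 2 ≤ m + 1 + 1), show m + 1 + 1 - 2 = m from rfl, coeff_derivative]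
        push_cast
        ring
    rw [hA, hBc, ih, Finset.prod_range_succ]
    push_cast
    ring

lemma iter_deriv_eq (γ a : ℝ) (k : ℕ) :
    ∀ x : ℝ, 0 < x → iteratedDeriv k (fun y : ℝ => y ^ a * Real.exp (-γ / y)) x
      = x ^ (a - 2 * (k : ℝ)) * Real.exp (-γ / x) * (bP a γ k).eval x := by
  induction k with
  | zero => intro x hx; simp [bP]
  | succ k ih =>
    intro x hx
    rw [iteratedDeriv_succ]
    have hev : iteratedDeriv k (fun y : ℝ => y ^ a * Real.exp (-γ / y))
        =ᶠ[nhds x] fun y : ℝ => y ^ (a - 2 * (k : ℝ)) * Real.exp (-γ / y) * (bP a γ k).eval y :=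
      Filter.eventuallyEq_of_mem (Ioi_mem_nhds hx) (fun y hy => ih y hy)
    rw [hev.deriv_eq]
    have hx0 : x ≠ 0 := ne_of_gt hx
    have h1 : HasDerivAt (fun y : ℝ => y ^ (a - 2 * (k : ℝ)))
        ((a - 2 * (k : ℝ)) * x ^ (a - 2 * (k : ℝ) - 1)) x :=
      Real.hasDerivAt_rpow_const (Or.inl hx0)
    have hinv : HasDerivAt (fun y : ℝ => -γ / y) (γ / x ^ 2) x := by
      have := (hasDerivAt_inv hx0).const_mul (-γ)
      simp only [div_eq_mul_inv]
      exact this.congr_deriv (by ring)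
    have h2 : HasDerivAt (fun y : ℝ => Real.exp (-γ / y))
        (Real.exp (-γ / x) * (γ / x ^ 2)) x := hinv.exp
    have h3 : HasDerivAt (fun y : ℝ => (bP a γ k).eval y) ((bP a γ k).derivative.eval x) x :=
      (bP a γ k).hasDerivAt x
    have hg : HasDerivAt (fun y : ℝ => y ^ (a - 2 * (k : ℝ)) * Real.exp (-γ / y) * (bP a γ k).eval y)
        (((a - 2 * (k : ℝ)) * x ^ (a - 2 * (k : ℝ) - 1) * Real.exp (-γ / x) + x ^ (a - 2 * (k : ℝ)) * (Real.exp (-γ / x) * (γ / x ^ 2))) *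
          (bP a γ k).eval x + x ^ (a - 2 * (k : ℝ)) * Real.exp (-γ / x) * (bP a γ k).derivative.eval x) x := (h1.mul h2).mul h3
    rw [hg.deriv]
    rw [bP_succ]
    simp only [eval_add, eval_mul, eval_C, eval_X, eval_pow]
    have e1 : x ^ (a - 2 * (k : ℝ) - 1) = x ^ (a - 2 * ((k : ℝ) + 1)) * x := by
      rw [show a - 2 * (k : ℝ) - 1 = (a - 2 * ((k : ℝ) + 1)) + 1 by ring, Real.rpow_add hx,
        Real.rpow_one]
    have e2 : x ^ (a - 2 * (k : ℝ)) = x ^ (a - 2 * ((k : ℝ) + 1)) * (x * x) := by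
      rw [show a - 2 * (k : ℝ) = (a - 2 * ((k : ℝ) + 1)) + 1 + 1 by ring, Real.rpow_add hx,
        Real.rpow_add hx, Real.rpow_one]
      ring
    push_cast
    rw [e1, e2]
    field_simp

/-- The Bessel function `B̃_n` given by the Rodrigues formula coincides
on `(0, ∞)` with a polynomial of degree exactly `n`. -/
theorem rg_bessel_is_polynomial (γ β : ℝ) (n : ℕ)
    (hγ : 0 < γ) (hβ : 1 < β) (hn : (2 * n : ℝ) ≤ β)
    (B : ℝ → ℝ)
    (hB : B = fun x : ℝ => x ^ (β + 1) * Real.exp (γ / x) *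
      iteratedDeriv n (fun y : ℝ => y ^ (2 * (n : ℝ) - β - 1) * Real.exp (-γ / y)) x) :
    ∃ p : Polynomial ℝ, p.degree = n ∧ ∀ x : ℝ, 0 < x → B x = p.eval x := by
  set a : ℝ := 2 * (n : ℝ) - β - 1 with ha
  refine ⟨bP a γ n, ?_, ?_⟩
  · have hL : (∏ j ∈ Finset.range n, (a - j)) ≠ 0 := by
      refine Finset.prod_ne_zero_iff.mpr (fun j hj => ?_)
      have hj0 : (0 : ℝ) ≤ j := Nat.cast_nonneg j
      have : a - j < 0 := by
        have : a ≤ -1 := by rw [ha]; linarith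
        linarith
      linarith
    have hc : (bP a γ n).coeff n ≠ 0 := by rw [bP_coeff]; exact hL
    have hp0 : bP a γ n ≠ 0 := fun h => hc (by simp [h])
    have hdeg : (bP a γ n).natDegree = n :=
      le_antisymm (bP_natDegree_le a γ n) (le_natDegree_of_ne_zero hc)
    rw [degree_eq_natDegree hp0, hdeg]
  · intro x hx
    rw [hB]
    simp only
    rw [iter_deriv_eq γ a n x hx]
    have h1 : x ^ (β + 1) * x ^ (a - 2 * (n : ℝ)) = 1 := by
      rw [← Real.rpow_add hx, show β + 1 + (a - 2 * (n : ℝ)) = 0 by rw [ha]; ring,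
        Real.rpow_zero]
    have h2 : Real.exp (γ / x) * Real.exp (-γ / x) = 1 := by
      rw [← Real.exp_add, neg_div, add_neg_cancel, Real.exp_zero]
    calc x ^ (β + 1) * Real.exp (γ / x) *
          (x ^ (a - 2 * (n : ℝ)) * Real.exp (-γ / x) * (bP a γ n).eval x)
        = (x ^ (β + 1) * x ^ (a - 2 * (n : ℝ))) * (Real.exp (γ / x) * Real.exp (-γ / x)) *
          (bP a γ n).eval x := by ring
      _ = (bP a γ n).eval x := by rw [h1, h2]; ring
end

section
/- Let θ>0, γ>0, β>2 and let n be a natural number with 4n ≤ β. Then for every x>0 the function F̃_n(x) = x^{1−γ/2}(γx+β)^{(γ+β)/2} (dⁿ/dxⁿ)[2ⁿ x^{γ/2+n−1}(γx+β)^{n−(γ+β)/2}] satisfies the eigenfunction identity (2θ/(γ(β−2))) x(γx+β) F̃_n''(x) − θ(x − β/(β−2)) F̃_n'(x) = −λ_n F̃_n(x), where λ_n = θ n(β−2n)/(β−2). -/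
open Real Set

private lemma fs_hd_pq (γ β p q : ℝ) {x : ℝ} (hx : 0 < x) (hw : 0 < γ*x+β) :
    HasDerivAt (fun y : ℝ => y ^ p * (γ*y+β) ^ q)
      (p * x^(p-1) * (γ*x+β)^q + q*γ* x^p * (γ*x+β)^(q-1)) x := by
  have h1 : HasDerivAt (fun y : ℝ => y ^ p) (p * x^(p-1)) x :=
    Real.hasDerivAt_rpow_const (Or.inl hx.ne')
  have hlin : HasDerivAt (fun y : ℝ => γ*y+β) γ x := by
    simpa using ((hasDerivAt_id x).const_mul γ).add_const β
  have h2 : HasDerivAt (fun y : ℝ => (γ*y+β) ^ q) (γ * q * (γ*x+β)^(q-1)) x := by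
    simpa using hlin.rpow_const (Or.inl hw.ne')
  have := h1.fun_mul h2
  exact this.congr_deriv (by ring)

private lemma fs_hd_cpq (K γ β p q : ℝ) {x : ℝ} (hx : 0 < x) (hw : 0 < γ*x+β) :
    HasDerivAt (fun y : ℝ => K * y ^ p * (γ*y+β) ^ q)
      (K * (p * x^(p-1) * (γ*x+β)^q) + K * (q*γ* x^p * (γ*x+β)^(q-1))) x := by
  have h := (fs_hd_pq γ β p q hx hw).const_mul K
  have he : (fun y : ℝ => K * (y ^ p * (γ*y+β) ^ q)) = fun y : ℝ => K * y ^ p * (γ*y+β) ^ q := by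
    funext y; ring
  rw [he] at h
  exact h.congr_deriv (by ring)

private lemma fs_iterated_smooth {f : ℝ → ℝ} (hf : ContDiffOn ℝ ⊤ f (Ioi 0)) (m : ℕ) :
    ContDiffOn ℝ ⊤ (iteratedDeriv m f) (Ioi 0) := by
  induction m with
  | zero => simpa [iteratedDeriv_zero] using hf
  | succ k ih =>
      rw [iteratedDeriv_succ]
      exact ih.deriv_of_isOpen isOpen_Ioi le_top

private lemma fs_deriv_eq_zero_on {G : ℝ → ℝ} {x : ℝ} (hx : 0 < x)
    (h : ∀ y ∈ Ioi (0:ℝ), G y = 0) : deriv G x = 0 := by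
  have hev : G =ᶠ[nhds x] (fun _ => (0:ℝ)) :=
    Filter.eventuallyEq_of_mem (isOpen_Ioi.mem_nhds hx) h
  rw [hev.deriv_eq]
  simp

private lemma fs_quad_deriv (γ β : ℝ) (x : ℝ) :
    HasDerivAt (fun y : ℝ => y*(γ*y+β)) (2*γ*x+β) x := by
  have hlin : HasDerivAt (fun y : ℝ => γ*y+β) γ x := by
    simpa using ((hasDerivAt_id x).const_mul γ).add_const β
  have := (hasDerivAt_id x).fun_mul hlin
  exact this.congr_deriv (by simp only [id_eq]; ring)

private lemma fs_lin_deriv (p q : ℝ) (x : ℝ) :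
    HasDerivAt (fun y : ℝ => p*y+q) p x := by
  simpa using ((hasDerivAt_id x).const_mul p).add_const q

/-- The Fisher–Snedecor function `F̃_n` given by the Rodrigues formula is an
eigenfunction of the generator of the Fisher–Snedecor diffusion with eigenvalue
`λ_n = θ n (β - 2n) / (β - 2)`. -/
theorem fs_polynomial_eigenfunction (θ γ β : ℝ) (n : ℕ)
    (hθ : 0 < θ) (hγ : 0 < γ) (hβ : 2 < β) (hn : (4 * n : ℝ) ≤ β)
    (F : ℝ → ℝ)
    (hF : F = fun x : ℝ => x ^ (1 - γ / 2) * (γ * x + β) ^ (γ / 2 + β / 2) *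
      iteratedDeriv n
        (fun y : ℝ => 2 ^ n * y ^ (γ / 2 + (n : ℝ) - 1) *
          (γ * y + β) ^ ((n : ℝ) - γ / 2 - β / 2)) x) :
    ∀ x : ℝ, 0 < x →
      (2 * θ / (γ * (β - 2))) * (x * (γ * x + β)) * deriv (deriv F) x
          - θ * (x - β / (β - 2)) * deriv F x
        = -(θ * n * (β - 2 * n) / (β - 2)) * F x := by
  have hβ0 : 0 < β := by linarith
  set c : ℝ := γ / 2 + (n : ℝ) - 1 with hc
  set d : ℝ := (n : ℝ) - γ / 2 - β / 2 with hd
  set a : ℝ := 1 - γ / 2 with ha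
  set b : ℝ := γ / 2 + β / 2 with hb
  set u : ℝ → ℝ := fun y : ℝ => 2 ^ n * y ^ c * (γ * y + β) ^ d with hu
  -- positivity of γ x + β on Ioi 0
  have hw : ∀ {x : ℝ}, 0 < x → 0 < γ * x + β := fun hx => by positivity
  -- smoothness of u
  have husmooth : ContDiffOn ℝ ⊤ u (Ioi 0) := by
    have h1 : ContDiffOn ℝ ⊤ (fun y : ℝ => y ^ c) (Ioi 0) := fun x hx =>
      (Real.contDiffAt_rpow_const_of_ne (ne_of_gt hx)).contDiffWithinAt
    have h2 : ContDiffOn ℝ ⊤ (fun y : ℝ => (γ*y+β) ^ d) (Ioi 0) := by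
      apply ContDiffOn.rpow_const_of_ne
      · exact ((contDiff_const.mul contDiff_id).add contDiff_const).contDiffOn
      · intro x hx
        exact (hw hx).ne'
    exact (contDiffOn_const.mul h1).mul h2
  have hdiff : ∀ (m : ℕ) {x : ℝ}, 0 < x → DifferentiableAt ℝ (iteratedDeriv m u) x := by
    intro m x hx
    exact ((fs_iterated_smooth husmooth m).contDiffAt
      (isOpen_Ioi.mem_nhds hx)).differentiableAt (by simp)
  have hDsucc : ∀ (m : ℕ) {x : ℝ}, 0 < x →
      HasDerivAt (iteratedDeriv m u) (iteratedDeriv (m+1) u x) x := by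
    intro m x hx
    rw [iteratedDeriv_succ]
    exact (hdiff m hx).hasDerivAt
  -- derivative of u
  have hud : ∀ {x : ℝ}, 0 < x → HasDerivAt u
      (2^n * (c * x^(c-1) * (γ*x+β)^d) + 2^n * (d*γ* x^c * (γ*x+β)^(d-1))) x := by
    intro x hx
    exact fs_hd_cpq (2^n) γ β c d hx (hw hx)
  -- Pearson equation
  have hPearson : ∀ y ∈ Ioi (0:ℝ),
      y*(γ*y+β) * iteratedDeriv 1 u y - ((γ*(c+d))*y + c*β) * iteratedDeriv 0 u y = 0 := by
    intro y hy
    have hy' : 0 < y := hy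
    have h1 : iteratedDeriv 1 u y = deriv u y := by rw [iteratedDeriv_one]
    rw [h1, (hud hy').deriv, iteratedDeriv_zero]
    have e1 : y ^ c = y * y^(c-1) := by
      nth_rewrite 1 [show c = 1+(c-1) by ring]
      rw [Real.rpow_add hy', Real.rpow_one]
    have e2 : (γ*y+β) ^ d = (γ*y+β) * (γ*y+β)^(d-1) := by
      nth_rewrite 1 [show d = 1+(d-1) by ring]
      rw [Real.rpow_add (hw hy'), Real.rpow_one]
    rw [hu]
    simp only []
    rw [e1, e2]
    ring
  -- iterated Pearson: the key second-order ODE for iterated derivatives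
  have hR : ∀ m : ℕ, ∀ x ∈ Ioi (0:ℝ),
      x*(γ*x+β) * iteratedDeriv (m+2) u x
      + (((m:ℝ)+1)*(2*γ*x+β) - ((γ*(c+d))*x + c*β)) * iteratedDeriv (m+1) u x
      + (((m:ℝ)+1)*(m:ℝ)*γ - ((m:ℝ)+1)*(γ*(c+d))) * iteratedDeriv m u x = 0 := by
    intro m
    induction m with
    | zero =>
      intro x hx
      have hx' : 0 < x := hx
      have hG : HasDerivAt (fun y : ℝ => y*(γ*y+β) * iteratedDeriv 1 u y
          - ((γ*(c+d))*y + c*β) * iteratedDeriv 0 u y)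
          (((2*γ*x+β) * iteratedDeriv 1 u x + x*(γ*x+β) * iteratedDeriv 2 u x)
            - ((γ*(c+d)) * iteratedDeriv 0 u x
              + ((γ*(c+d))*x + c*β) * iteratedDeriv 1 u x)) x :=
        ((fs_quad_deriv γ β x).mul (hDsucc 1 hx')).sub
          ((fs_lin_deriv (γ*(c+d)) (c*β) x).mul (hDsucc 0 hx'))
      have hz := fs_deriv_eq_zero_on hx' hPearson
      rw [hG.deriv] at hz
      push_cast
      have h2 : iteratedDeriv (0+2) u x = iteratedDeriv 2 u x := by norm_num
      have h1 : iteratedDeriv (0+1) u x = iteratedDeriv 1 u x := by norm_num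
      rw [h2, h1]
      linear_combination hz
    | succ m ih =>
      intro x hx
      have hx' : 0 < x := hx
      have hG : HasDerivAt (fun y : ℝ => y*(γ*y+β) * iteratedDeriv (m+2) u y
          + (((m:ℝ)+1)*(2*γ*y+β) - ((γ*(c+d))*y + c*β)) * iteratedDeriv (m+1) u y
          + (((m:ℝ)+1)*(m:ℝ)*γ - ((m:ℝ)+1)*(γ*(c+d))) * iteratedDeriv m u y)
          ((((2*γ*x+β) * iteratedDeriv (m+2) u x + x*(γ*x+β) * iteratedDeriv (m+3) u x)
            + ((((m:ℝ)+1)*(2*γ) - (γ*(c+d))) * iteratedDeriv (m+1) u x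
              + (((m:ℝ)+1)*(2*γ*x+β) - ((γ*(c+d))*x + c*β)) * iteratedDeriv (m+2) u x))
            + (0 * iteratedDeriv m u x
              + (((m:ℝ)+1)*(m:ℝ)*γ - ((m:ℝ)+1)*(γ*(c+d))) * iteratedDeriv (m+1) u x)) x := by
        refine (((fs_quad_deriv γ β x).mul ?_).add (?_)).add ((hasDerivAt_const x _).mul ?_)
        · have := hDsucc (m+2) hx'
          convert this using 2
        · have hlin : HasDerivAt (fun y : ℝ => ((m:ℝ)+1)*(2*γ*y+β) - ((γ*(c+d))*y + c*β))
              (((m:ℝ)+1)*(2*γ) - (γ*(c+d))) x := by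
            have h1 : HasDerivAt (fun y : ℝ => (((m:ℝ)+1)*(2*γ) - (γ*(c+d)))*y
                + (((m:ℝ)+1)*β - c*β)) (((m:ℝ)+1)*(2*γ) - (γ*(c+d))) x :=
              fs_lin_deriv _ _ x
            convert h1 using 2 with y
            ring
          exact hlin.mul (hDsucc (m+1) hx')
        · exact hDsucc m hx'
      have hz := fs_deriv_eq_zero_on hx' (ih)
      rw [hG.deriv] at hz
      push_cast
      have h3 : iteratedDeriv (m+1+2) u x = iteratedDeriv (m+3) u x := by norm_num
      have h2 : iteratedDeriv (m+1+1) u x = iteratedDeriv (m+2) u x := by norm_num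
      rw [h3, h2]
      linear_combination hz
  -- final assembly
  subst hF
  intro x hx
  have hx' : 0 < x := hx
  have hwx : 0 < γ*x+β := hw hx'
  have star := hR n x hx
  have hFd : ∀ y ∈ Ioi (0:ℝ),
      HasDerivAt (fun z : ℝ => z ^ a * (γ*z+β) ^ b * iteratedDeriv n u z)
      ((a * y^(a-1) * (γ*y+β)^b + b*γ* y^a * (γ*y+β)^(b-1)) * iteratedDeriv n u y
        + y^a*(γ*y+β)^b * iteratedDeriv (n+1) u y) y := by
    intro y hy
    exact (fs_hd_pq γ β a b hy (hw hy)).mul (hDsucc n hy)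
  have hd1 : deriv (fun z : ℝ => z ^ a * (γ*z+β) ^ b * iteratedDeriv n u z) x
      = (a * x^(a-1) * (γ*x+β)^b + b*γ* x^a * (γ*x+β)^(b-1)) * iteratedDeriv n u x
        + x^a*(γ*x+β)^b * iteratedDeriv (n+1) u x := (hFd x hx).deriv
  set E1 : ℝ → ℝ := fun y : ℝ =>
      (a * y^(a-1) * (γ*y+β)^b + b*γ* y^a * (γ*y+β)^(b-1)) * iteratedDeriv n u y
        + y^a*(γ*y+β)^b * iteratedDeriv (n+1) u y with hE1def
  have hev : deriv (fun z : ℝ => z ^ a * (γ*z+β) ^ b * iteratedDeriv n u z) =ᶠ[nhds x] E1 :=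
    Filter.eventuallyEq_of_mem (isOpen_Ioi.mem_nhds hx') (fun y hy => (hFd y hy).deriv)
  have hE2 : HasDerivAt E1
      ((((a*((a-1) * x^(a-1-1) * (γ*x+β)^b) + a*(b*γ* x^(a-1) * (γ*x+β)^(b-1)))
        + ((b*γ)*(a * x^(a-1) * (γ*x+β)^(b-1)) + (b*γ)*((b-1)*γ* x^a * (γ*x+β)^(b-1-1))))
          * iteratedDeriv n u x
        + (a * x^(a-1) * (γ*x+β)^b + b*γ* x^a * (γ*x+β)^(b-1)) * iteratedDeriv (n+1) u x)
      + ((a * x^(a-1) * (γ*x+β)^b + b*γ* x^a * (γ*x+β)^(b-1)) * iteratedDeriv (n+1) u x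
        + x^a*(γ*x+β)^b * iteratedDeriv (n+2) u x)) x := by
    exact (((fs_hd_cpq a γ β (a-1) b hx' hwx).add
        (fs_hd_cpq (b*γ) γ β a (b-1) hx' hwx)).mul (hDsucc n hx')).add
      ((fs_hd_pq γ β a b hx' hwx).mul (hDsucc (n+1) hx'))
  have hd2 : deriv (deriv (fun z : ℝ => z ^ a * (γ*z+β) ^ b * iteratedDeriv n u z)) x
      = _ := hev.deriv_eq.trans hE2.deriv
  rw [hd2, hd1]
  beta_reduce
  -- rpow reductions
  have ea2 : x ^ a = x * x^(a-1) := by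
    nth_rewrite 1 [show a = 1+(a-1) by ring]
    rw [Real.rpow_add hx', Real.rpow_one]
  have eb2 : (γ*x+β) ^ b = (γ*x+β) * (γ*x+β)^(b-1) := by
    nth_rewrite 1 [show b = 1+(b-1) by ring]
    rw [Real.rpow_add hwx, Real.rpow_one]
  have ea1 : x ^ (a-1) = x * x^(a-1-1) := by
    nth_rewrite 1 [show a-1 = 1+(a-1-1) by ring]
    rw [Real.rpow_add hx', Real.rpow_one]
  have eb1 : (γ*x+β) ^ (b-1) = (γ*x+β) * (γ*x+β)^(b-1-1) := by
    nth_rewrite 1 [show b-1 = 1+(b-1-1) by ring]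
    rw [Real.rpow_add hwx, Real.rpow_one]
  rw [ea2, eb2, ea1, eb1]
  set X := x ^ (a-1-1) with hX
  set W := (γ*x+β) ^ (b-1-1) with hW
  set v := iteratedDeriv n u x with hv
  set v1 := iteratedDeriv (n+1) u x with hv1
  set v2 := iteratedDeriv (n+2) u x with hv2
  have hxw : x*(γ*x+β) ≠ 0 := by positivity
  have star' : v2 = (-((((n:ℝ)+1)*(2*γ*x+β) - ((γ*(c+d))*x + c*β)) * v1)
      - (((n:ℝ)+1)*(n:ℝ)*γ - ((n:ℝ)+1)*(γ*(c+d))) * v) / (x*(γ*x+β)) := by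
    rw [eq_div_iff hxw]
    linarith [star]
  rw [star']
  have hb2 : β - 2 ≠ 0 := by linarith
  field_simp
  ring
end

section
/- Let γ>0, β>2 and let n be a natural number with 4n ≤ β. Then the function F̃_n(x) = x^{1−γ/2}(γx+β)^{(γ+β)/2} (dⁿ/dxⁿ)[2ⁿ x^{γ/2+n−1}(γx+β)^{n−(γ+β)/2}] coincides on (0,∞) with a polynomial of degree exactly n. -/
open Polynomial

noncomputable def fsAux (γ β a b c : ℝ) : ℕ → Polynomial ℝ
  | 0 => C c
  | m + 1 =>
      C (a - m) * (C γ * X + C β) * fsAux γ β a b c m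
        + C (γ * (b - m)) * X * fsAux γ β a b c m
        + X * (C γ * X + C β) * derivative (fsAux γ β a b c m)

lemma lin_natDegree_le (γ β : ℝ) : (C γ * X + C β).natDegree ≤ 1 :=
  (Polynomial.natDegree_add_le _ _).trans
    (max_le ((Polynomial.natDegree_C_mul_le _ _).trans Polynomial.natDegree_X_le)
      (by simp))

lemma fsAux_natDegree_le (γ β a b c : ℝ) (m : ℕ) :
    (fsAux γ β a b c m).natDegree ≤ m := by
  induction m with
  | zero => simp [fsAux]
  | succ k ih =>
      refine (Polynomial.natDegree_add_le _ _).trans (max_le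
        ((Polynomial.natDegree_add_le _ _).trans (max_le ?_ ?_)) ?_)
      · calc (C (a - (k:ℝ)) * (C γ * X + C β) * fsAux γ β a b c k).natDegree
            ≤ ((C (a - (k:ℝ))).natDegree + (C γ * X + C β).natDegree)
              + (fsAux γ β a b c k).natDegree :=
              Polynomial.natDegree_mul_le.trans (by gcongr; exact Polynomial.natDegree_mul_le)
          _ ≤ (0 + 1) + k := by
              gcongr
              · exact (Polynomial.natDegree_C _).le.trans (by omega)
              · exact lin_natDegree_le γ β
          _ = k + 1 := by omega
      · calc (C (γ * (b - (k:ℝ))) * X * fsAux γ β a b c k).natDegree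
            ≤ (C (γ * (b - (k:ℝ))) * X).natDegree + (fsAux γ β a b c k).natDegree :=
              Polynomial.natDegree_mul_le
          _ ≤ 1 + k := by
              gcongr
              exact (Polynomial.natDegree_C_mul_le _ _).trans Polynomial.natDegree_X_le
          _ = k + 1 := by omega
      · rcases Nat.eq_zero_or_pos k with hk | hk
        · subst hk; simp [fsAux]
        · calc (X * (C γ * X + C β) * derivative (fsAux γ β a b c k)).natDegree
              ≤ ((X : Polynomial ℝ).natDegree + (C γ * X + C β).natDegree)
                + (derivative (fsAux γ β a b c k)).natDegree :=
                Polynomial.natDegree_mul_le.trans (by gcongr; exact Polynomial.natDegree_mul_le)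
            _ ≤ (1 + 1) + (k - 1) :=
                add_le_add (add_le_add Polynomial.natDegree_X_le (lin_natDegree_le γ β))
                  ((Polynomial.natDegree_derivative_le _).trans (Nat.sub_le_sub_right ih 1))
            _ ≤ k + 1 := by omega

lemma coeff_X_mul_derivative (p : Polynomial ℝ) (m : ℕ) :
    (X * derivative p).coeff m = m * p.coeff m := by
  cases m with
  | zero => simp [Polynomial.mul_coeff_zero]
  | succ k =>
      rw [Polynomial.coeff_X_mul, Polynomial.coeff_derivative]
      push_cast; ring

lemma fsAux_coeff (γ β a b c : ℝ) (m : ℕ) :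
    (fsAux γ β a b c m).coeff m
      = c * ∏ k ∈ Finset.range m, (γ * (a + b - k)) := by
  induction m with
  | zero => simp [fsAux]
  | succ k ih =>
      set P := fsAux γ β a b c k with hPdef
      have htop : P.coeff (k + 1) = 0 :=
        Polynomial.coeff_eq_zero_of_natDegree_lt
          (lt_of_le_of_lt (fsAux_natDegree_le γ β a b c k) (by omega))
      have e : fsAux γ β a b c (k + 1)
          = C ((a - k) * γ + γ * (b - k)) * (X * P) + C ((a - k) * β) * P
            + C γ * (X * (X * derivative P)) + C β * (X * derivative P) := by
        simp only [fsAux, hPdef, map_add, map_mul, map_sub]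
        ring
      rw [e]
      simp only [Polynomial.coeff_add, Polynomial.coeff_C_mul, Polynomial.coeff_X_mul,
        coeff_X_mul_derivative, Polynomial.coeff_derivative, htop, ih]
      rw [Finset.prod_range_succ]
      ring

lemma fsAux_iteratedDeriv (γ β a b c : ℝ) (hγ : 0 < γ) (hβ : 0 < β) (m : ℕ) :
    ∀ x : ℝ, 0 < x →
      iteratedDeriv m (fun y : ℝ => c * (y ^ a * (γ * y + β) ^ b)) x
        = x ^ (a - m) * (γ * x + β) ^ (b - m) * (fsAux γ β a b c m).eval x := by
  induction m with
  | zero =>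
      intro x hx
      simp only [iteratedDeriv_zero, Nat.cast_zero, sub_zero, fsAux, Polynomial.eval_C]
      ring
  | succ k ih =>
      intro x hx
      have hx' : (0:ℝ) < γ * x + β := by positivity
      rw [iteratedDeriv_succ]
      have hev : iteratedDeriv k (fun y : ℝ => c * (y ^ a * (γ * y + β) ^ b))
          =ᶠ[nhds x] fun y =>
            y ^ (a - k) * (γ * y + β) ^ (b - k) * (fsAux γ β a b c k).eval y := by
        filter_upwards [Ioi_mem_nhds hx] with y hy using ih y hy
      rw [hev.deriv_eq]
      have h1 : HasDerivAt (fun y : ℝ => y ^ (a - (k:ℝ)))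
          ((a - k) * x ^ (a - (k:ℝ) - 1)) x :=
        Real.hasDerivAt_rpow_const (Or.inl hx.ne')
      have hin : HasDerivAt (fun y : ℝ => γ * y + β) γ x := by
        simpa using ((hasDerivAt_id x).const_mul γ).add_const β
      have h2 : HasDerivAt (fun y : ℝ => (γ * y + β) ^ (b - (k:ℝ)))
          ((b - k) * (γ * x + β) ^ (b - (k:ℝ) - 1) * γ) x :=
        HasDerivAt.comp x (Real.hasDerivAt_rpow_const (Or.inl hx'.ne')) hin
      have h3 : HasDerivAt (fun y : ℝ => (fsAux γ β a b c k).eval y)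
          ((derivative (fsAux γ β a b c k)).eval x) x :=
        (fsAux γ β a b c k).hasDerivAt x
      have hD :
          deriv (fun y =>
            y ^ (a - (k:ℝ)) * (γ * y + β) ^ (b - (k:ℝ)) * (fsAux γ β a b c k).eval y) x
          = ((a - k) * x ^ (a - (k:ℝ) - 1) * (γ * x + β) ^ (b - (k:ℝ))
              + x ^ (a - (k:ℝ)) * ((b - k) * (γ * x + β) ^ (b - (k:ℝ) - 1) * γ))
              * (fsAux γ β a b c k).eval x
            + x ^ (a - (k:ℝ)) * (γ * x + β) ^ (b - (k:ℝ))
              * (derivative (fsAux γ β a b c k)).eval x :=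
        ((h1.mul h2).mul h3).deriv
      rw [hD]
      have ha : a - ((k + 1 : ℕ) : ℝ) = a - (k:ℝ) - 1 := by push_cast; ring
      have hb : b - ((k + 1 : ℕ) : ℝ) = b - (k:ℝ) - 1 := by push_cast; ring
      have hxx : x ^ (a - (k:ℝ)) = x ^ (a - (k:ℝ) - 1) * x := by
        rw [← Real.rpow_add_one hx.ne' (a - (k:ℝ) - 1)]
        congr 1
        ring
      have hyy : (γ * x + β) ^ (b - (k:ℝ))
          = (γ * x + β) ^ (b - (k:ℝ) - 1) * (γ * x + β) := by
        rw [← Real.rpow_add_one hx'.ne' (b - (k:ℝ) - 1)]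
        congr 1
        ring
      rw [ha, hb, hxx, hyy]
      simp only [fsAux, Polynomial.eval_add, Polynomial.eval_mul, Polynomial.eval_C,
        Polynomial.eval_X]
      ring

/-- The Fisher–Snedecor function `F̃_n` given by the Rodrigues formula
coincides on `(0, ∞)` with a polynomial of degree exactly `n`. -/
theorem fs_function_is_polynomial (γ β : ℝ) (n : ℕ)
    (hγ : 0 < γ) (hβ : 2 < β) (hn : (4 * n : ℝ) ≤ β)
    (F : ℝ → ℝ)
    (hF : F = fun x : ℝ => x ^ (1 - γ / 2) * (γ * x + β) ^ (γ / 2 + β / 2) *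
      iteratedDeriv n
        (fun y : ℝ => 2 ^ n * y ^ (γ / 2 + (n : ℝ) - 1) *
          (γ * y + β) ^ ((n : ℝ) - γ / 2 - β / 2)) x) :
    ∃ p : Polynomial ℝ, p.degree = n ∧ ∀ x : ℝ, 0 < x → F x = p.eval x := by
  have hβ0 : (0:ℝ) < β := by linarith
  set a : ℝ := γ / 2 + (n : ℝ) - 1 with ha_def
  set b : ℝ := (n : ℝ) - γ / 2 - β / 2 with hb_def
  set c : ℝ := (2:ℝ) ^ n with hc_def
  refine ⟨fsAux γ β a b c n, ?_, ?_⟩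
  · -- degree is exactly n
    have hcoeff : (fsAux γ β a b c n).coeff n
        = c * ∏ k ∈ Finset.range n, (γ * (a + b - k)) := fsAux_coeff γ β a b c n
    have hne : (fsAux γ β a b c n).coeff n ≠ 0 := by
      rw [hcoeff]
      refine mul_ne_zero (by positivity) (Finset.prod_ne_zero_iff.mpr ?_)
      intro k hk
      have hk0 : (0:ℝ) ≤ (k:ℝ) := Nat.cast_nonneg k
      have : a + b - (k:ℝ) < 0 := by
        simp only [ha_def, hb_def]
        linarith
      exact (mul_neg_of_pos_of_neg hγ this).ne
    exact le_antisymm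
      (Polynomial.natDegree_le_iff_degree_le.mp (fsAux_natDegree_le γ β a b c n))
      (Polynomial.le_degree_of_ne_zero hne)
  · intro x hx
    have hx' : (0:ℝ) < γ * x + β := by positivity
    have hfun : (fun y : ℝ => 2 ^ n * y ^ (γ / 2 + (n : ℝ) - 1) *
          (γ * y + β) ^ ((n : ℝ) - γ / 2 - β / 2))
        = fun y : ℝ => c * (y ^ a * (γ * y + β) ^ b) := by
      funext y
      simp only [ha_def, hb_def, hc_def]
      ring
    rw [hF]
    simp only [hfun]
    rw [show (fun y : ℝ => c * y ^ a * (γ * y + β) ^ b) = fun y => c * (y ^ a * (γ * y + β) ^ b) from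
      funext fun y => by ring, fsAux_iteratedDeriv γ β a b c hγ hβ0 n x hx]
    have e1 : x ^ (1 - γ / 2) * x ^ (a - (n:ℝ)) = 1 := by
      rw [← Real.rpow_add hx, show (1 - γ / 2) + (a - (n:ℝ)) = 0 by
        simp only [ha_def]; ring, Real.rpow_zero]
    have e2 : (γ * x + β) ^ (γ / 2 + β / 2) * (γ * x + β) ^ (b - (n:ℝ)) = 1 := by
      rw [← Real.rpow_add hx', show (γ / 2 + β / 2) + (b - (n:ℝ)) = 0 by
        simp only [hb_def]; ring, Real.rpow_zero]
    calc x ^ (1 - γ / 2) * (γ * x + β) ^ (γ / 2 + β / 2) *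
          (x ^ (a - (n:ℝ)) * (γ * x + β) ^ (b - (n:ℝ)) * (fsAux γ β a b c n).eval x)
        = (x ^ (1 - γ / 2) * x ^ (a - (n:ℝ)))
            * ((γ * x + β) ^ (γ / 2 + β / 2) * (γ * x + β) ^ (b - (n:ℝ)))
            * (fsAux γ β a b c n).eval x := by ring
      _ = (fsAux γ β a b c n).eval x := by rw [e1, e2]; ring
end

section
/- Let θ>0, γ>0, β>2 and λ > Λ := θβ²/(8(β−2)). Then the function f(x) = f_1(x,−λ) defined by the Gauss hypergeometric series is twice differentiable on (0, β/γ) and satisfies the Sturm–Liouville equation (2θ/(γ(β−2))) x(γx+β) f''(x) − θ(x − β/(β−2)) f'(x) = −λ f(x) for all x ∈ (0, β/γ). -/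
open Finset

/-- Coefficient of the hypergeometric power series. -/
noncomputable def fsCoef (γ β k : ℝ) (n : ℕ) : ℝ :=
  (∏ j ∈ Finset.range n, (((j : ℝ) - β / 4) ^ 2 + k ^ 2)) /
    ((∏ j ∈ Finset.range n, (γ / 2 + (j : ℝ))) * (n.factorial : ℝ)) * (-γ / β) ^ n

lemma fsCoef_succ {γ β k : ℝ} (hγ : 0 < γ) (hβ : 0 < β) (n : ℕ) :
    fsCoef γ β k (n + 1) =
      fsCoef γ β k n * (((((n : ℝ) - β / 4) ^ 2 + k ^ 2) / ((γ / 2 + (n : ℝ)) * ((n : ℝ) + 1)))) *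
        (-γ / β) := by
  have hQ : (∏ j ∈ Finset.range n, (γ / 2 + (j : ℝ))) ≠ 0 := by
    refine ne_of_gt (Finset.prod_pos fun j _ => ?_)
    positivity
  have hfac : ((n.factorial : ℝ)) ≠ 0 := by positivity
  have hγn : (γ / 2 + (n : ℝ)) ≠ 0 := by positivity
  have hn1 : ((n : ℝ) + 1) ≠ 0 := by positivity
  simp only [fsCoef, Finset.prod_range_succ]
  generalize (∏ j ∈ Finset.range n, (((j : ℝ) - β / 4) ^ 2 + k ^ 2)) = P
  simp only [fsCoef, Finset.prod_range_succ, Nat.factorial_succ, pow_succ]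
  push_cast
  field_simp

lemma fsCoef_abs_succ {γ β k : ℝ} (hγ : 0 < γ) (hβ : 0 < β) (n : ℕ) :
    |fsCoef γ β k (n + 1)| =
      |fsCoef γ β k n| * (((((n : ℝ) - β / 4) ^ 2 + k ^ 2) / ((γ / 2 + (n : ℝ)) * ((n : ℝ) + 1)))) *
        (γ / β) := by
  rw [fsCoef_succ hγ hβ n, abs_mul, abs_mul]
  have h1 : |((((n : ℝ) - β / 4) ^ 2 + k ^ 2) / ((γ / 2 + (n : ℝ)) * ((n : ℝ) + 1)))| =
      ((((n : ℝ) - β / 4) ^ 2 + k ^ 2) / ((γ / 2 + (n : ℝ)) * ((n : ℝ) + 1))) := by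
    apply abs_of_nonneg; positivity
  have h2 : |(-γ / β)| = γ / β := by
    rw [abs_div, abs_neg, abs_of_pos hγ, abs_of_pos hβ]
  rw [h1, h2]

set_option maxHeartbeats 1000000 in
/-- Master summability: `∑ (n+1)^2 |a_n| t^n` converges for `0 ≤ t < β/γ`. -/
lemma fsCoef_master_summable {γ β k : ℝ} (hγ : 0 < γ) (hβ : 0 < β) {t : ℝ}
    (ht0 : 0 ≤ t) (ht : t < β / γ) :
    Summable (fun n : ℕ => ((n : ℝ) + 1) ^ 2 * |fsCoef γ β k n| * t ^ n) := by
  set t' : ℝ := (t + β / γ) / 2 with ht'def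
  have hβγ : 0 < β / γ := by positivity
  have htt' : t < t' := by rw [ht'def]; linarith
  have ht'0 : 0 < t' := lt_of_le_of_lt ht0 htt'
  have ht' : t' < β / γ := by rw [ht'def]; linarith
  set q : ℝ := γ * t' / β with hqdef
  have hq0 : 0 < q := by positivity
  have hq1 : q < 1 := by
    rw [hqdef, div_lt_one hβ]
    calc γ * t' < γ * (β / γ) := by exact (mul_lt_mul_iff_right₀ hγ).mpr ht'
    _ = β := by field_simp
  set r : ℝ := (1 + q) / 2 with hrdef
  have hqr : q < r := by rw [hrdef]; linarith
  have hr1 : r < 1 := by rw [hrdef]; linarith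
  set D : ℝ := β ^ 2 / 16 + k ^ 2 with hDdef
  have hD0 : 0 < D := by positivity
  clear_value t' q r D
  -- base summability of |a n| t'^n via ratio test
  have hbase : Summable (fun n : ℕ => |fsCoef γ β k n| * t' ^ n) := by
    apply summable_of_ratio_norm_eventually_le hr1
    obtain ⟨N0, hN0⟩ := exists_nat_ge (Real.sqrt (D * q / (r - q)))
    filter_upwards [Filter.eventually_ge_atTop (max 1 N0)] with n hn
    have hn1 : 1 ≤ n := le_trans (le_max_left _ _) hn
    have hnN0 : (N0 : ℝ) ≤ (n : ℝ) := by exact_mod_cast le_trans (le_max_right _ _) hn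
    have hn0 : (0:ℝ) < (n : ℝ) := by exact_mod_cast hn1
    -- D * q ≤ n^2 * (r - q)
    have hkey : D * q ≤ (n : ℝ) ^ 2 * (r - q) := by
      have hrq : 0 < r - q := by linarith
      have h1 : Real.sqrt (D * q / (r - q)) ≤ (n : ℝ) := le_trans hN0 hnN0
      have h2 : D * q / (r - q) ≤ (n : ℝ) ^ 2 := by
        have := Real.sq_sqrt (show (0:ℝ) ≤ D * q / (r - q) from div_nonneg (by positivity) hrq.le)
        nlinarith [Real.sqrt_nonneg (D * q / (r - q))]
      calc D * q = D * q / (r - q) * (r - q) := by field_simp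
      _ ≤ (n : ℝ) ^ 2 * (r - q) := by exact mul_le_mul_of_nonneg_right h2 (le_of_lt hrq)
    -- ratio bound
    have hR : ((((n : ℝ) - β / 4) ^ 2 + k ^ 2) / ((γ / 2 + (n : ℝ)) * ((n : ℝ) + 1))) * q ≤ r := by
      have hden : (n : ℝ) ^ 2 ≤ (γ / 2 + (n : ℝ)) * ((n : ℝ) + 1) := by nlinarith
      have hdenpos : (0:ℝ) < (γ / 2 + (n : ℝ)) * ((n : ℝ) + 1) := by positivity
      have hnum : (((n : ℝ) - β / 4) ^ 2 + k ^ 2) ≤ (n : ℝ) ^ 2 + D := by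
        rw [hDdef]; nlinarith
      rw [div_mul_eq_mul_div, div_le_iff₀ hdenpos]
      nlinarith [mul_le_mul_of_nonneg_right hnum hq0.le,
        mul_le_mul_of_nonneg_left hden (show (0:ℝ) ≤ r by linarith)]
    have hnn1 : (0:ℝ) ≤ |fsCoef γ β k (n+1)| * t' ^ (n+1) := by positivity
    have hnn2 : (0:ℝ) ≤ |fsCoef γ β k n| * t' ^ n := by positivity
    rw [Real.norm_eq_abs, Real.norm_eq_abs, abs_of_nonneg hnn1, abs_of_nonneg hnn2,
      fsCoef_abs_succ hγ hβ n]
    have : |fsCoef γ β k n| * ((((n : ℝ) - β / 4) ^ 2 + k ^ 2) /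
        ((γ / 2 + (n : ℝ)) * ((n : ℝ) + 1))) * (γ / β) * t' ^ (n + 1)
        = (|fsCoef γ β k n| * t' ^ n) *
          (((((n : ℝ) - β / 4) ^ 2 + k ^ 2) / ((γ / 2 + (n : ℝ)) * ((n : ℝ) + 1))) * q) := by
      rw [hqdef, pow_succ]; ring
    rw [this]
    calc (|fsCoef γ β k n| * t' ^ n) *
          (((((n : ℝ) - β / 4) ^ 2 + k ^ 2) / ((γ / 2 + (n : ℝ)) * ((n : ℝ) + 1))) * q)
        ≤ (|fsCoef γ β k n| * t' ^ n) * r := by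
          exact mul_le_mul_of_nonneg_left hR (by positivity)
    _ = r * (|fsCoef γ β k n| * t' ^ n) := by ring
  -- boundedness
  set M : ℝ := ∑' n : ℕ, |fsCoef γ β k n| * t' ^ n with hMdef
  have hM : ∀ n : ℕ, |fsCoef γ β k n| * t' ^ n ≤ M := by
    intro n
    exact Summable.le_tsum hbase n (fun j _ => by positivity)
  -- comparison
  have hs : t / t' < 1 := (div_lt_one ht'0).mpr htt'
  have hs0 : 0 ≤ t / t' := by positivity
  have hgeo : Summable (fun n : ℕ => M * (((n : ℝ) + 1) ^ 2 * (t / t') ^ n)) := by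
    apply Summable.mul_left
    have h2 := summable_pow_mul_geometric_of_norm_lt_one (R := ℝ) 2
      (by rw [Real.norm_eq_abs, abs_of_nonneg hs0]; exact hs)
    have h1 := summable_pow_mul_geometric_of_norm_lt_one (R := ℝ) 1
      (by rw [Real.norm_eq_abs, abs_of_nonneg hs0]; exact hs)
    have h0 := summable_pow_mul_geometric_of_norm_lt_one (R := ℝ) 0
      (by rw [Real.norm_eq_abs, abs_of_nonneg hs0]; exact hs)
    have := (h2.add ((h1.mul_left 2).add h0))
    apply this.congr
    intro n; ring
  apply Summable.of_nonneg_of_le (fun n => by positivity) _ hgeo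
  intro n
  have htn : t ^ n = (t / t') ^ n * t' ^ n := by
    rw [div_pow]; field_simp
  calc ((n : ℝ) + 1) ^ 2 * |fsCoef γ β k n| * t ^ n
      = ((n : ℝ) + 1) ^ 2 * (t / t') ^ n * (|fsCoef γ β k n| * t' ^ n) := by rw [htn]; ring
  _ ≤ ((n : ℝ) + 1) ^ 2 * (t / t') ^ n * M := by
      exact mul_le_mul_of_nonneg_left (hM n) (by positivity)
  _ = M * (((n : ℝ) + 1) ^ 2 * (t / t') ^ n) := by ring

/-- The key coefficient recurrence that encodes the hypergeometric ODE. -/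
lemma fsCoef_recurrence {θ γ β lam k : ℝ} (hθ : 0 < θ) (hγ : 0 < γ) (hβ : 2 < β)
    (hk2 : k ^ 2 = lam * (β - 2) / (2 * θ) - β ^ 2 / 16) (n : ℕ) :
    (2 * θ / (β - 2) * (n : ℝ) * ((n : ℝ) - 1) - θ * (n : ℝ) + lam) * fsCoef γ β k n
      + (2 * θ * β / (γ * (β - 2)) * ((n : ℝ) + 1) * (n : ℝ)
          + θ * β / (β - 2) * ((n : ℝ) + 1)) * fsCoef γ β k (n + 1) = 0 := by
  have hβ0 : (0:ℝ) < β := by linarith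
  have hβ2 : (β:ℝ) - 2 ≠ 0 := by intro h; nlinarith
  have hγn : (γ / 2 + (n : ℝ)) ≠ 0 := by positivity
  have hn1 : ((n : ℝ) + 1) ≠ 0 := by positivity
  rw [fsCoef_succ hγ hβ0 n, hk2]
  field_simp
  ring

lemma summable_of_abs_le_mul {S : ℕ → ℝ} (hS : Summable S) (K : ℝ) {f : ℕ → ℝ}
    (h : ∀ n, |f n| ≤ K * S n) : Summable f :=
  Summable.of_norm_bounded (hS.mul_left K) (fun n => by rw [Real.norm_eq_abs]; exact h n)

set_option maxHeartbeats 1600000 in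
/-- The hypergeometric function `f₁(·, -λ)` solves the Sturm–Liouville
equation of the Fisher–Snedecor diffusion on `(0, β/γ)` for `λ` in the continuous part of
the spectrum. -/
theorem fs_hypergeometric_solves_sturm_liouville (θ γ β lam : ℝ)
    (hθ : 0 < θ) (hγ : 0 < γ) (hβ : 2 < β)
    (hlam : θ * β ^ 2 / (8 * (β - 2)) < lam)
    (k : ℝ) (hk : k = Real.sqrt (lam * (β - 2) / (2 * θ) - β ^ 2 / 16))
    (f : ℝ → ℝ)
    (hf : f = fun x : ℝ => ∑' n : ℕ,
      (∏ j ∈ Finset.range n, (((j : ℝ) - β / 4) ^ 2 + k ^ 2)) /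
        ((∏ j ∈ Finset.range n, (γ / 2 + (j : ℝ))) * (n.factorial : ℝ)) *
        (-γ * x / β) ^ n) :
    ∀ x ∈ Set.Ioo (0 : ℝ) (β / γ),
      DifferentiableAt ℝ f x ∧ DifferentiableAt ℝ (deriv f) x ∧
      (2 * θ / (γ * (β - 2))) * (x * (γ * x + β)) * deriv (deriv f) x
          - θ * (x - β / (β - 2)) * deriv f x
        = -lam * f x := by
  have hβ0 : (0:ℝ) < β := by linarith
  have hβ2 : (0:ℝ) < β - 2 := by linarith
  set a : ℕ → ℝ := fsCoef γ β k with hadef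
  have hfx : f = fun y : ℝ => ∑' n : ℕ, a n * y ^ n := by
    rw [hf]; funext y; apply tsum_congr; intro n
    rw [hadef, fsCoef, show -γ * y / β = -γ / β * y by ring, mul_pow]
    ring
  have hk2 : k ^ 2 = lam * (β - 2) / (2 * θ) - β ^ 2 / 16 := by
    rw [hk]; apply Real.sq_sqrt
    have h1 : θ * β ^ 2 < lam * (8 * (β - 2)) := (div_lt_iff₀ (by positivity)).mp hlam
    have h2 : β ^ 2 / 16 ≤ lam * (β - 2) / (2 * θ) := by
      rw [div_le_div_iff₀ (by norm_num) (by positivity)]; nlinarith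
    linarith
  intro x hx
  obtain ⟨hx0, hxu⟩ := hx
  have hβγ : 0 < β / γ := by positivity
  set ρ : ℝ := (x + β / γ) / 2 with hρdef
  have hxρ : x < ρ := by rw [hρdef]; linarith
  have hρ0 : 0 < ρ := lt_trans hx0 hxρ
  have hρu : ρ < β / γ := by rw [hρdef]; linarith
  clear_value ρ
  have hS : Summable (fun n : ℕ => ((n : ℝ) + 1) ^ 2 * |a n| * ρ ^ n) :=
    fsCoef_master_summable hγ hβ0 hρ0.le hρu
  have hxs : x ∈ Set.Ioo (-ρ) ρ := ⟨by linarith, hxρ⟩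
  have habs : ∀ y ∈ Set.Ioo (-ρ) ρ, |y| ≤ ρ := fun y hy =>
    abs_le.mpr ⟨le_of_lt hy.1, le_of_lt hy.2⟩
  -- termwise derivatives
  have hD0 : ∀ (n : ℕ) (y : ℝ), HasDerivAt (fun z => a n * z ^ n)
      (a n * ((n : ℝ) * y ^ (n - 1))) y := fun n y => (hasDerivAt_pow n y).const_mul (a n)
  have hD1 : ∀ (n : ℕ) (y : ℝ), HasDerivAt (fun z => a n * ((n : ℝ) * z ^ (n - 1)))
      (a n * ((n : ℝ) * (((n - 1 : ℕ) : ℝ) * y ^ (n - 1 - 1)))) y := by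
    intro n y
    have h := (hasDerivAt_pow (n - 1) y).const_mul (a n * (n : ℝ))
    simpa [mul_assoc] using h
  -- bounds on the derivative terms
  have hB1 : ∀ (n : ℕ) (y : ℝ), y ∈ Set.Ioo (-ρ) ρ →
      ‖a n * ((n : ℝ) * y ^ (n - 1))‖ ≤
        (1 / ρ) * (((n : ℝ) + 1) ^ 2 * |a n| * ρ ^ n) := by
    intro n y hy
    rw [Real.norm_eq_abs, abs_mul, abs_mul, abs_pow, Nat.abs_cast]
    match n with
    | 0 => simp; positivity
    | (m+1) =>
      have h1 : |y| ^ (m + 1 - 1) ≤ ρ ^ m := by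
        simpa using pow_le_pow_left₀ (abs_nonneg y) (habs y hy) m
      have hm0 : (0:ℝ) ≤ (m : ℝ) := Nat.cast_nonneg m
      have h2 : (((m+1 : ℕ)) : ℝ) ≤ ((((m+1 : ℕ)) : ℝ) + 1) ^ 2 := by push_cast; nlinarith
      calc |a (m+1)| * (((m+1:ℕ) : ℝ) * |y| ^ (m + 1 - 1))
          ≤ |a (m+1)| * (((((m+1:ℕ)) : ℝ) + 1) ^ 2 * ρ ^ m) := by
            refine mul_le_mul_of_nonneg_left ?_ (abs_nonneg _)
            exact mul_le_mul h2 h1 (by positivity) (by positivity)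
      _ = (1 / ρ) * (((((m+1:ℕ)) : ℝ) + 1) ^ 2 * |a (m+1)| * ρ ^ (m+1)) := by
            rw [pow_succ]; field_simp; ring
  have hB2 : ∀ (n : ℕ) (y : ℝ), y ∈ Set.Ioo (-ρ) ρ →
      ‖a n * ((n : ℝ) * (((n - 1 : ℕ) : ℝ) * y ^ (n - 1 - 1)))‖ ≤
        (1 / ρ ^ 2) * (((n : ℝ) + 1) ^ 2 * |a n| * ρ ^ n) := by
    intro n y hy
    rw [Real.norm_eq_abs, abs_mul, abs_mul, abs_mul, abs_pow, Nat.abs_cast, Nat.abs_cast]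
    match n with
    | 0 => simp; positivity
    | 1 => simp; positivity
    | (m+2) =>
      have h1 : |y| ^ (m + 2 - 1 - 1) ≤ ρ ^ m := by
        simpa using pow_le_pow_left₀ (abs_nonneg y) (habs y hy) m
      have hm0 : (0:ℝ) ≤ (m : ℝ) := Nat.cast_nonneg m
      have h2 : (((m+2 : ℕ)) : ℝ) * (((m+2-1 : ℕ)) : ℝ) ≤ ((((m+2 : ℕ)) : ℝ) + 1) ^ 2 := by
        push_cast; nlinarith
      calc |a (m+2)| * (((m+2:ℕ) : ℝ) * ((((m+2-1:ℕ)) : ℝ) * |y| ^ (m + 2 - 1 - 1)))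
          ≤ |a (m+2)| * (((((m+2:ℕ)) : ℝ) + 1) ^ 2 * ρ ^ m) := by
            refine mul_le_mul_of_nonneg_left ?_ (abs_nonneg _)
            rw [← mul_assoc]
            exact mul_le_mul h2 h1 (by positivity) (by positivity)
      _ = (1 / ρ ^ 2) * (((((m+2:ℕ)) : ℝ) + 1) ^ 2 * |a (m+2)| * ρ ^ (m+2)) := by
            rw [pow_succ, pow_succ]; field_simp; ring
  have hu1 : Summable (fun n : ℕ => (1 / ρ) * (((n : ℝ) + 1) ^ 2 * |a n| * ρ ^ n)) :=
    hS.mul_left _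
  have hu2 : Summable (fun n : ℕ => (1 / ρ ^ 2) * (((n : ℝ) + 1) ^ 2 * |a n| * ρ ^ n)) :=
    hS.mul_left _
  -- summability of the series itself and of the derivative series at x
  have hsum0 : Summable (fun n : ℕ => a n * x ^ n) := by
    apply summable_of_abs_le_mul hS 1
    intro n
    rw [one_mul, abs_mul, abs_pow, abs_of_pos hx0]
    have h1 : x ^ n ≤ ρ ^ n := pow_le_pow_left₀ hx0.le hxρ.le n
    have h2 : (1:ℝ) ≤ ((n : ℝ) + 1) ^ 2 := by nlinarith [show (0:ℝ) ≤ (n:ℝ) from Nat.cast_nonneg n]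
    calc |a n| * x ^ n ≤ |a n| * ρ ^ n :=
          mul_le_mul_of_nonneg_left h1 (abs_nonneg _)
    _ ≤ ((n : ℝ) + 1) ^ 2 * |a n| * ρ ^ n := by
        refine mul_le_mul_of_nonneg_right ?_ (by positivity)
        nlinarith [abs_nonneg (a n)]
  have hsum1 : Summable (fun n : ℕ => a n * ((n : ℝ) * x ^ (n - 1))) := by
    apply summable_of_abs_le_mul hS (1 / ρ)
    intro n
    have := hB1 n x hxs
    rwa [Real.norm_eq_abs] at this
  have hsum2 : Summable (fun n : ℕ => a n * ((n : ℝ) * (((n - 1 : ℕ) : ℝ) * x ^ (n - 1 - 1)))) := by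
    apply summable_of_abs_le_mul hS (1 / ρ ^ 2)
    intro n
    have := hB2 n x hxs
    rwa [Real.norm_eq_abs] at this
  -- first derivative
  have hg : ∀ y ∈ Set.Ioo (-ρ) ρ,
      HasDerivAt f (∑' n : ℕ, a n * ((n : ℝ) * y ^ (n - 1))) y := by
    intro y hy
    rw [hfx]
    exact hasDerivAt_tsum_of_isPreconnected hu1 isOpen_Ioo isPreconnected_Ioo
      (fun n z _ => hD0 n z) hB1 hxs hsum0 hy
  set g : ℝ → ℝ := fun y => ∑' n : ℕ, a n * ((n : ℝ) * y ^ (n - 1)) with hgdef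
  have hg2 : ∀ y ∈ Set.Ioo (-ρ) ρ,
      HasDerivAt g (∑' n : ℕ, a n * ((n : ℝ) * (((n - 1 : ℕ) : ℝ) * y ^ (n - 1 - 1)))) y := by
    intro y hy
    exact hasDerivAt_tsum_of_isPreconnected hu2 isOpen_Ioo isPreconnected_Ioo
      (fun n z _ => hD1 n z) hB2 hxs hsum1 hy
  have hderiv_eq : ∀ y ∈ Set.Ioo (-ρ) ρ, deriv f y = g y := fun y hy => (hg y hy).deriv
  have heq : deriv f =ᶠ[nhds x] g :=
    Filter.eventuallyEq_of_mem (isOpen_Ioo.mem_nhds hxs) hderiv_eq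
  refine ⟨(hg x hxs).differentiableAt, ?_, ?_⟩
  · rw [Filter.EventuallyEq.differentiableAt_iff heq]
    exact (hg2 x hxs).differentiableAt
  · have hd1 : deriv f x = ∑' n : ℕ, a n * ((n : ℝ) * x ^ (n - 1)) := hderiv_eq x hxs
    have hd2 : deriv (deriv f) x
        = ∑' n : ℕ, a n * ((n : ℝ) * (((n - 1 : ℕ) : ℝ) * x ^ (n - 1 - 1))) := by
      rw [Filter.EventuallyEq.deriv_eq heq]
      exact (hg2 x hxs).deriv
    rw [hd1, hd2]
    simp only [hfx]
    -- the algebra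
    set C2 : ℝ := 2 * θ / (γ * (β - 2)) * (x * (γ * x + β)) with hC2def
    set C1 : ℝ := θ * (x - β / (β - 2)) with hC1def
    have key : C2 * (∑' n : ℕ, a n * ((n : ℝ) * (((n - 1 : ℕ) : ℝ) * x ^ (n - 1 - 1))))
        - C1 * (∑' n : ℕ, a n * ((n : ℝ) * x ^ (n - 1)))
        + lam * (∑' n : ℕ, a n * x ^ n) = 0 := by
      -- coefficient functions
      set b : ℕ → ℝ := fun n =>
        (2 * θ / (β - 2) * (n : ℝ) * ((n : ℝ) - 1) - θ * (n : ℝ) + lam) * a n with hbdef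
      set c : ℕ → ℝ := fun n =>
        (2 * θ * β / (γ * (β - 2)) * (n : ℝ) * ((n : ℝ) - 1) + θ * β / (β - 2) * (n : ℝ)) * a n
        with hcdef
      have hE : ∀ n : ℕ, C2 * (a n * ((n : ℝ) * (((n - 1 : ℕ) : ℝ) * x ^ (n - 1 - 1))))
          - C1 * (a n * ((n : ℝ) * x ^ (n - 1))) + lam * (a n * x ^ n)
          = b n * x ^ n + c n * x ^ (n - 1) := by
        intro n
        rw [hbdef, hcdef, hC1def, hC2def]
        match n with
        | 0 => norm_num
        | 1 => norm_num; ring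
        | (m+2) =>
          simp only [show m+2-1-1 = m from rfl, show m+2-1 = m+1 from rfl]
          push_cast
          have hβ2' : β - 2 ≠ 0 := ne_of_gt hβ2
          field_simp
          ring
      -- summability of the two coefficient series
      have hsb : Summable (fun n : ℕ => b n * x ^ n) := by
        apply summable_of_abs_le_mul hS (2 * θ / (β - 2) + θ + |lam|)
        intro n
        rw [hbdef]
        have hn0 : (0:ℝ) ≤ (n : ℝ) := Nat.cast_nonneg n
        have hxn : x ^ n ≤ ρ ^ n := pow_le_pow_left₀ hx0.le hxρ.le n
        have hco : |2 * θ / (β - 2) * (n : ℝ) * ((n : ℝ) - 1) - θ * (n : ℝ) + lam|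
            ≤ (2 * θ / (β - 2) + θ + |lam|) * ((n : ℝ) + 1) ^ 2 := by
          have hpos : (0:ℝ) < 2 * θ / (β - 2) := by positivity
          rw [abs_le]
          constructor
          · nlinarith [mul_nonneg hpos.le (mul_nonneg hn0 hn0), mul_nonneg hpos.le hn0,
              mul_nonneg hθ.le (mul_nonneg hn0 hn0), mul_nonneg hθ.le hn0,
              mul_nonneg (abs_nonneg lam) (mul_nonneg hn0 hn0),
              mul_nonneg (abs_nonneg lam) hn0, le_abs_self lam, neg_abs_le lam]
          · nlinarith [mul_nonneg hpos.le (mul_nonneg hn0 hn0), mul_nonneg hpos.le hn0,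
              mul_nonneg hθ.le (mul_nonneg hn0 hn0), mul_nonneg hθ.le hn0,
              mul_nonneg (abs_nonneg lam) (mul_nonneg hn0 hn0),
              mul_nonneg (abs_nonneg lam) hn0, le_abs_self lam, neg_abs_le lam]
        rw [abs_mul, abs_mul, abs_pow, abs_of_pos hx0]
        calc |2 * θ / (β - 2) * (n : ℝ) * ((n : ℝ) - 1) - θ * (n : ℝ) + lam| * |a n| * x ^ n
            ≤ ((2 * θ / (β - 2) + θ + |lam|) * ((n : ℝ) + 1) ^ 2) * |a n| * ρ ^ n := by
              apply mul_le_mul (mul_le_mul hco le_rfl (abs_nonneg _) (by positivity)) hxn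
                (by positivity) (by positivity)
        _ = (2 * θ / (β - 2) + θ + |lam|) * (((n : ℝ) + 1) ^ 2 * |a n| * ρ ^ n) := by ring
      have hsc : Summable (fun n : ℕ => c n * x ^ (n - 1)) := by
        apply summable_of_abs_le_mul hS ((2 * θ * β / (γ * (β - 2)) + θ * β / (β - 2)) / ρ)
        intro n
        rw [hcdef]
        match n with
        | 0 => simp; positivity
        | (m+1) =>
          have hn0 : (0:ℝ) ≤ (m : ℝ) := Nat.cast_nonneg m
          have hxn : x ^ (m + 1 - 1) ≤ ρ ^ m := by
            simpa using pow_le_pow_left₀ hx0.le hxρ.le m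
          have hK1 : (0:ℝ) < 2 * θ * β / (γ * (β - 2)) := by positivity
          have hK2 : (0:ℝ) < θ * β / (β - 2) := by positivity
          have hco : |2 * θ * β / (γ * (β - 2)) * ((m+1 : ℕ) : ℝ) * (((m+1 : ℕ) : ℝ) - 1)
              + θ * β / (β - 2) * ((m+1 : ℕ) : ℝ)|
              ≤ (2 * θ * β / (γ * (β - 2)) + θ * β / (β - 2)) * (((m+1 : ℕ) : ℝ) + 1) ^ 2 := by
            push_cast
            rw [abs_le]
            constructor
            · nlinarith [mul_nonneg hK1.le (mul_nonneg hn0 hn0), mul_nonneg hK1.le hn0,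
                mul_nonneg hK2.le hn0, hK1.le, hK2.le]
            · nlinarith [mul_nonneg hK1.le (mul_nonneg hn0 hn0), mul_nonneg hK1.le hn0,
                mul_nonneg hK2.le hn0, hK1.le, hK2.le]
          rw [abs_mul, abs_mul, abs_pow, abs_of_pos hx0]
          calc |2 * θ * β / (γ * (β - 2)) * ((m+1 : ℕ) : ℝ) * (((m+1 : ℕ) : ℝ) - 1)
              + θ * β / (β - 2) * ((m+1 : ℕ) : ℝ)| * |a (m+1)| * x ^ (m + 1 - 1)
              ≤ ((2 * θ * β / (γ * (β - 2)) + θ * β / (β - 2)) * (((m+1:ℕ) : ℝ) + 1) ^ 2)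
                  * |a (m+1)| * ρ ^ m := by
                apply mul_le_mul (mul_le_mul hco le_rfl (abs_nonneg _) (by positivity)) hxn
                  (by positivity) (by positivity)
          _ = ((2 * θ * β / (γ * (β - 2)) + θ * β / (β - 2)) / ρ) *
                ((((m+1:ℕ) : ℝ) + 1) ^ 2 * |a (m+1)| * ρ ^ (m+1)) := by
              rw [pow_succ]; field_simp; ring
      -- shifted series
      have hsc' : Summable (fun n : ℕ => c (n + 1) * x ^ n) := by
        have h := (summable_nat_add_iff 1).mpr hsc
        apply h.congr
        intro n
        simp
      have hshift : (∑' n : ℕ, c n * x ^ (n - 1)) = ∑' n : ℕ, c (n + 1) * x ^ n := by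
        rw [Summable.tsum_eq_zero_add hsc]
        have hc0 : c 0 * x ^ (0 - 1) = 0 := by rw [hcdef]; norm_num
        rw [hc0, zero_add]
        apply tsum_congr
        intro n
        simp
      -- the recurrence kills everything
      have hbc : ∀ n : ℕ, b n + c (n + 1) = 0 := by
        intro n
        rw [hbdef, hcdef, hadef]
        have h := fsCoef_recurrence (γ := γ) (β := β) (k := k) hθ hγ hβ hk2 n
        push_cast
        linarith [h]
      calc C2 * (∑' n : ℕ, a n * ((n : ℝ) * (((n - 1 : ℕ) : ℝ) * x ^ (n - 1 - 1))))
            - C1 * (∑' n : ℕ, a n * ((n : ℝ) * x ^ (n - 1)))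
            + lam * (∑' n : ℕ, a n * x ^ n)
          = (∑' n : ℕ, C2 * (a n * ((n : ℝ) * (((n - 1 : ℕ) : ℝ) * x ^ (n - 1 - 1)))))
            - (∑' n : ℕ, C1 * (a n * ((n : ℝ) * x ^ (n - 1))))
            + ∑' n : ℕ, lam * (a n * x ^ n) := by
            rw [tsum_mul_left, tsum_mul_left, tsum_mul_left]
      _ = ∑' n : ℕ, (C2 * (a n * ((n : ℝ) * (((n - 1 : ℕ) : ℝ) * x ^ (n - 1 - 1))))
            - C1 * (a n * ((n : ℝ) * x ^ (n - 1))) + lam * (a n * x ^ n)) := by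
            rw [← Summable.tsum_sub (hsum2.mul_left C2) (hsum1.mul_left C1),
              ← Summable.tsum_add ((hsum2.mul_left C2).sub (hsum1.mul_left C1)) (hsum0.mul_left lam)]
      _ = ∑' n : ℕ, (b n * x ^ n + c n * x ^ (n - 1)) := tsum_congr hE
      _ = (∑' n : ℕ, b n * x ^ n) + ∑' n : ℕ, c n * x ^ (n - 1) := Summable.tsum_add hsb hsc
      _ = (∑' n : ℕ, b n * x ^ n) + ∑' n : ℕ, c (n + 1) * x ^ n := by rw [hshift]
      _ = ∑' n : ℕ, (b n + c (n + 1)) * x ^ n := by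
            rw [← Summable.tsum_add hsb hsc']
            exact tsum_congr fun n => by ring
      _ = 0 := by
            rw [tsum_congr (fun n => by rw [hbc n, zero_mul]), tsum_zero]
    linarith [key]
end
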